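/- Relative equilibria of the reduced degenerate Neumann system: let b_0 < b_1 < … < b_ℓ be real numbers and w_0, …, w_ℓ > 0. Suppose ξ ∈ ℝ^{ℓ+1} with ξ_σ ≠ 0 for all σ and ∑_σ ξ_σ² = 1, and β ∈ ℝ satisfy the critical point condition b_σ·ξ_σ − w_σ/ξ_σ³ = β·ξ_σ for every σ (i.e. ∇V_μ(ξ) = β·ξ for the amended potential). Then β < b_0, and for every σ one has ξ_σ² = √( w_σ/(b_σ − β) ); moreover the critical value of the amended potential is V_μ(ξ) = ½ ∑_σ √w_σ · ( ω_σ + b_σ/ω_σ ), where ω_σ = √(b_σ − β). -/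

import Mathlib

/-- **Relative equilibria of the reduced degenerate Neumann system.**
Let `b_0 < … < b_ℓ`, `w_σ > 0`, and suppose `ξ` with `ξ_σ ≠ 0`, `∑ ξ_σ² = 1` and `β ∈ ℝ`
satisfy the critical point condition `b_σ ξ_σ − w_σ/ξ_σ³ = β ξ_σ` for every `σ`
(`∇V_μ(ξ) = β ξ` for the amended potential).  Then `β < b_0`, `ξ_σ² = √(w_σ/(b_σ − β))`
for every `σ`, and the critical value of the amended potential is
`V_μ(ξ) = ½ ∑_σ √w_σ (ω_σ + b_σ/ω_σ)` where `ω_σ = √(b_σ − β)`. -/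
theorem stmt18 (ℓ : ℕ) (b : Fin (ℓ + 1) → ℝ) (hb : StrictMono b)
    (w : Fin (ℓ + 1) → ℝ) (hw : ∀ σ, 0 < w σ)
    (ξ : Fin (ℓ + 1) → ℝ) (hξ : ∀ σ, ξ σ ≠ 0) (hsphere : ∑ σ, (ξ σ) ^ 2 = 1)
    (β : ℝ) (hcrit : ∀ σ, b σ * ξ σ - w σ / (ξ σ) ^ 3 = β * ξ σ) :
    β < b 0 ∧
    (∀ σ, (ξ σ) ^ 2 = Real.sqrt (w σ / (b σ - β))) ∧
    (1 / 2) * (∑ σ, (b σ * (ξ σ) ^ 2 + w σ / (ξ σ) ^ 2))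
      = (1 / 2) * ∑ σ, Real.sqrt (w σ) *
          (Real.sqrt (b σ - β) + b σ / Real.sqrt (b σ - β)) := by
  have key : ∀ σ, (b σ - β) * (ξ σ) ^ 4 = w σ := by
    intro σ
    have h := hcrit σ
    have hne : (ξ σ) ^ 3 ≠ 0 := pow_ne_zero 3 (hξ σ)
    field_simp at h
    rw [div_eq_iff hne] at h
    nlinarith [h]
  have hpos : ∀ σ, 0 < b σ - β := by
    intro σ
    have hne := hξ σ
    have h4 : 0 < (ξ σ) ^ 4 := by positivity
    nlinarith [key σ, hw σ]
  have hsq : ∀ σ, (ξ σ) ^ 2 = Real.sqrt (w σ / (b σ - β)) := by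
    intro σ
    have : w σ / (b σ - β) = ((ξ σ) ^ 2) ^ 2 := by
      rw [← key σ, mul_comm, mul_div_assoc, div_self (hpos σ).ne', mul_one]
      ring
    rw [this, Real.sqrt_sq (sq_nonneg _)]
  refine ⟨by linarith [hpos 0], hsq, ?_⟩
  congr 1
  apply Finset.sum_congr rfl
  intro σ _
  have hωpos : 0 < Real.sqrt (b σ - β) := Real.sqrt_pos.mpr (hpos σ)
  have hswpos : 0 < Real.sqrt (w σ) := Real.sqrt_pos.mpr (hw σ)
  have hω2 : Real.sqrt (b σ - β) ^ 2 = b σ - β := Real.sq_sqrt (hpos σ).le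
  have hsw2 : Real.sqrt (w σ) ^ 2 = w σ := Real.sq_sqrt (hw σ).le
  have hξ2 : (ξ σ) ^ 2 = Real.sqrt (w σ) / Real.sqrt (b σ - β) := by
    rw [hsq σ, Real.sqrt_div (hw σ).le]
  have e1 : Real.sqrt (w σ) * Real.sqrt (w σ) = w σ := Real.mul_self_sqrt (hw σ).le
  rw [hξ2]
  field_simp
  linear_combination (- Real.sqrt (b σ - β) ^ 2) * e1
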